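/- For every density operator ρ on ℂ^d, every positive integer n, every δ > 0 and every η > 0: if B is an η-shadow of ρ^{⊗n} (i.e. 0 ≤ B ≤ 1 and Tr(ρ^{⊗n} B) ≥ η), then Tr B ≥ (η − d/δ²)·exp₂(nH(ρ) − K·d·δ·√n), where K = 2 log₂(e)/e and H(ρ) = −Tr(ρ log₂ ρ). -/

import Mathlib

open Matrix BigOperators Finset
open scoped Classical ComplexOrder

noncomputable section

/-- Square complex matrices of size `d` (operators on `ℂ^d`). -/
abbrev Mat (d : ℕ) := Matrix (Fin d) (Fin d) ℂ

/-- Operators on the `n`-fold tensor power `(ℂ^d)^{⊗n}`, indexed by `Fin n → Fin d`. -/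
abbrev MatPow (d n : ℕ) := Matrix (Fin n → Fin d) (Fin n → Fin d) ℂ

/-- Tensor product `A 0 ⊗ A 1 ⊗ ⋯ ⊗ A (n-1)` of a family of `d × d` matrices. -/
def tensorPow {d n : ℕ} (A : Fin n → Mat d) : MatPow d n :=
  Matrix.of fun j k => ∏ i, A i (j i) (k i)

/-- Exponential to base 2. -/
def exp2 (t : ℝ) : ℝ := (2 : ℝ) ^ t

/-- `P` is a probability distribution on the finite set `X`. -/
def IsProbDist {X : Type*} [Fintype X] (P : X → ℝ) : Prop :=
  (∀ x, 0 ≤ P x) ∧ ∑ x, P x = 1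

/-- `ρ` is a density operator (a state): positive semidefinite with trace one. -/
def IsState {ι : Type*} [Fintype ι] [DecidableEq ι] (ρ : Matrix ι ι ℂ) : Prop :=
  ρ.PosSemidef ∧ ρ.trace = 1

/-- `N(x|x^n)`: number of occurrences of the letter `x` in the sequence `xs`. -/
def countIn {X : Type*} {n : ℕ} (x : X) (xs : Fin n → X) : ℕ :=
  (Finset.univ.filter fun i => xs i = x).card

/-- The variance-typical set `T^n_{P,δ}`. -/
def typicalSet {X : Type*} [Fintype X] (n : ℕ) (P : X → ℝ) (δ : ℝ) :
    Finset (Fin n → X) :=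
  Finset.univ.filter fun xs => ∀ x : X,
    |(countIn x xs : ℝ) - n * P x| ≤ δ * Real.sqrt n * Real.sqrt (P x * (1 - P x))

/-- Product (i.i.d.) probability `P^{⊗n}(A)` of a set `A` of sequences. -/
def prodProb {X : Type*} [Fintype X] {n : ℕ} (P : X → ℝ) (A : Finset (Fin n → X)) : ℝ :=
  ∑ xs ∈ A, ∏ i, P (xs i)

/-- Shannon entropy to base 2. -/
def shannonEntropy {X : Type*} [Fintype X] (P : X → ℝ) : ℝ :=
  -∑ x, P x * Real.logb 2 (P x)

/-- von Neumann entropy to base 2, `H(ρ) = -Tr(ρ log₂ ρ)`, via the eigenvalues. -/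
def vnEntropy {d : ℕ} (ρ : Mat d) : ℝ :=
  if h : ρ.IsHermitian then -∑ i, h.eigenvalues i * Real.logb 2 (h.eigenvalues i) else 0

/-- The constant `K = 2 log₂(e) / e`. -/
def Kconst : ℝ := 2 * Real.logb 2 (Real.exp 1) / Real.exp 1

/-- A diagonalization `ρ = Σ_j R j • π j` into one-dimensional mutually orthogonal
eigenprojectors, with eigenvalue list `R` a probability distribution. -/
def IsDiagonalization {d : ℕ} (ρ : Mat d) (R : Fin d → ℝ) (π : Fin d → Mat d) : Prop :=
  (∀ j, (π j).PosSemidef) ∧ (∀ j, π j * π j = π j) ∧ (∀ j, (π j).trace = 1) ∧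
    (∀ j k, j ≠ k → π j * π k = 0) ∧ (∑ j, π j = 1) ∧
    ρ = ∑ j, (R j : ℂ) • π j ∧ IsProbDist R

/-- The variance-typical projector `Π^n_{ρ,δ}` of a state with fixed diagonalization
`(R, π)`. -/
def typicalProj {d : ℕ} (n : ℕ) (R : Fin d → ℝ) (π : Fin d → Mat d) (δ : ℝ) : MatPow d n :=
  ∑ js ∈ typicalSet n R δ, tensorPow fun i => π (js i)

/-- `B` is an `η`-shadow of the state `σ`: `0 ≤ B ≤ 1` and `Tr(σB) ≥ η`. -/
def IsShadow {ι : Type*} [Fintype ι] [DecidableEq ι] (σ B : Matrix ι ι ℂ) (η : ℝ) : Prop :=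
  B.PosSemidef ∧ ((1 : Matrix ι ι ℂ) - B).PosSemidef ∧ η ≤ (Matrix.trace (σ * B)).re

/-- Average state `PW = Σ_x P(x) W_x` of a cq-channel under input distribution `P`. -/
def avgState {X : Type*} [Fintype X] {d : ℕ} (P : X → ℝ) (W : X → Mat d) : Mat d :=
  ∑ x, (P x : ℂ) • W x

/-- Conditional von Neumann entropy `H(W|P) = Σ_x P(x) H(W_x)`. -/
def condEntropy {X : Type*} [Fintype X] {d : ℕ} (P : X → ℝ) (W : X → Mat d) : ℝ :=
  ∑ x, P x * vnEntropy (W x)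

/-- Mutual information `I(P;W) = H(PW) − H(W|P)`. -/
def mutualInfo {X : Type*} [Fintype X] {d : ℕ} (P : X → ℝ) (W : X → Mat d) : ℝ :=
  vnEntropy (avgState P W) - condEntropy P W

/-- Capacity `C(W) = max_P I(P;W)`. -/
def capacity {X : Type*} [Fintype X] {d : ℕ} (W : X → Mat d) : ℝ :=
  sSup {c | ∃ P : X → ℝ, IsProbDist P ∧ c = mutualInfo P W}

/-- `(f, D)` (with message set `M` inside the outcome index set `M'`) is an
`(n,λ)`-code for the cq-channel `W`: the `D m` are positive semidefinite, sum to the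
identity, and each message is decoded correctly with probability at least `1 - λ`. -/
def IsCode {X : Type*} [Fintype X] {d n : ℕ} (W : X → Mat d) (lam : ℝ)
    {M' : Type*} [Fintype M'] (M : Finset M') (f : M' → Fin n → X)
    (D : M' → MatPow d n) : Prop :=
  (∀ m, (D m).PosSemidef) ∧ (∑ m, D m = 1) ∧
    ∀ m ∈ M, 1 - lam ≤ (Matrix.trace (tensorPow (fun i => W (f m i)) * D m)).re

/-- `N(n,λ)`: maximal size of an `(n,λ)`-code for `W`. -/
def maxCodeSize {X : Type*} [Fintype X] (d : ℕ) (W : X → Mat d) (n : ℕ) (lam : ℝ) : ℕ :=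
  sSup {k | ∃ (M' : Type) (_ : Fintype M') (M : Finset M') (f : M' → Fin n → X)
    (D : M' → MatPow d n), IsCode W lam M f D ∧ M.card = k}

/-- Trace norm `‖A‖₁ = Tr|A|`: the sum of the singular values. -/
def traceNorm {ι : Type*} [Fintype ι] [DecidableEq ι] (A : Matrix ι ι ℂ) : ℝ :=
  ∑ i, Real.sqrt ((Matrix.posSemidef_conjTranspose_mul_self A).1.eigenvalues i)

/-- Trace distance `D(ρ,σ) = ½‖ρ−σ‖₁`. -/
def traceDist {ι : Type*} [Fintype ι] [DecidableEq ι] (ρ σ : Matrix ι ι ℂ) : ℝ :=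
  traceNorm (ρ - σ) / 2

/-- (Pure-state) fidelity `F(ρ,σ) = Tr(ρσ)`. -/
def fidelity {ι : Type*} [Fintype ι] [DecidableEq ι] (ρ σ : Matrix ι ι ℂ) : ℝ :=
  (Matrix.trace (ρ * σ)).re

/-- A pure state: the rank-one orthogonal projector `|ψ⟩⟨ψ|` onto the span of a
unit vector `ψ`. -/
def IsPureState {ι : Type*} [Fintype ι] (ρ : Matrix ι ι ℂ) : Prop :=
  ∃ ψ : ι → ℂ, (∑ i, star (ψ i) * ψ i) = 1 ∧ ρ = Matrix.vecMulVec ψ (star ψ)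

/-- The set of eigenvalue-index sequences `js` that are variance-typical, with
constant `δ`, for the distribution `q x` on each block `I_x = {i : xs i = x}`. -/
def condTypicalSet {X : Type*} [Fintype X] {n d : ℕ} (xs : Fin n → X)
    (q : X → Fin d → ℝ) (δ : ℝ) : Finset (Fin n → Fin d) :=
  Finset.univ.filter fun js => ∀ (x : X) (k : Fin d),
    |((Finset.univ.filter fun i => xs i = x ∧ js i = k).card : ℝ) - (countIn x xs : ℝ) * q x k|
      ≤ δ * Real.sqrt (countIn x xs) * Real.sqrt (q x k * (1 - q x k))

/-- Conditional variance-typical projector `Π^n_{W,δ}(x^n) = ⊗_{x∈X} Π^{I_x}_{W_x,δ}`,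
with respect to fixed diagonalizations `W_x = Σ_j (q x j) • (π x j)`. -/
def condTypicalProj {X : Type*} [Fintype X] {d : ℕ} {n : ℕ} (xs : Fin n → X)
    (q : X → Fin d → ℝ) (π : X → Fin d → Mat d) (δ : ℝ) : MatPow d n :=
  ∑ js ∈ condTypicalSet xs q δ, tensorPow fun i => π (xs i) (js i)


/-! ### Auxiliary lemmas -/

section Aux

lemma sum_prod_fn {n d : ℕ} {α : Type*} [CommSemiring α] (F : Fin n → Fin d → α) :
    ∑ xs : Fin n → Fin d, ∏ i, F i (xs i) = ∏ i, ∑ y, F i y :=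
  (Fintype.prod_sum F).symm

lemma prod_two_ite {n : ℕ} {α : Type*} [CommMonoid α] {i j : Fin n} (hij : i ≠ j)
    (a b : Fin n → α) :
    (∏ k, if k = i then a k else if k = j then b k else 1) = a i * b j := by
  rw [← Finset.mul_prod_erase univ _ (mem_univ i)]
  rw [← Finset.mul_prod_erase (univ.erase i) _ (Finset.mem_erase.mpr ⟨hij.symm, mem_univ j⟩)]
  have h1 : (∏ k ∈ (univ.erase i).erase j,
      (if k = i then a k else if k = j then b k else 1)) = 1 := by
    apply Finset.prod_eq_one
    intro k hk
    simp only [Finset.mem_erase] at hk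
    simp [hk.1, hk.2.1]
  simp [h1, hij.symm]

lemma prod_one_ite {n : ℕ} {α : Type*} [CommMonoid α] (i : Fin n) (a : Fin n → α) :
    (∏ k, if k = i then a k else 1) = a i := by
  simp [Finset.prod_ite_eq' univ i a]

variable {n d : ℕ} {R : Fin d → ℝ}

lemma marg_one (hsum : ∑ y, R y = 1) (i : Fin n) (f : Fin d → ℝ) :
    ∑ xs : Fin n → Fin d, (∏ k, R (xs k)) * f (xs i) = ∑ y, R y * f y := by
  have key : ∀ xs : Fin n → Fin d, (∏ k, R (xs k)) * f (xs i)
      = ∏ k, (R (xs k) * (if k = i then f (xs k) else 1)) := by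
    intro xs
    rw [Finset.prod_mul_distrib, prod_one_ite i (fun k => f (xs k))]
  simp_rw [key]
  rw [sum_prod_fn (fun k y => R y * (if k = i then f y else 1))]
  have : ∀ k : Fin n, (∑ y, R y * (if k = i then f y else 1))
      = if k = i then ∑ y, R y * f y else 1 := by
    intro k; by_cases h : k = i <;> simp [h, hsum]
  simp_rw [this]
  exact prod_one_ite i _

lemma marg_two (hsum : ∑ y, R y = 1) {i j : Fin n} (hij : i ≠ j) (f g : Fin d → ℝ) :
    ∑ xs : Fin n → Fin d, (∏ k, R (xs k)) * (f (xs i) * g (xs j))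
      = (∑ y, R y * f y) * (∑ y, R y * g y) := by
  have key : ∀ xs : Fin n → Fin d, (∏ k, R (xs k)) * (f (xs i) * g (xs j))
      = ∏ k, (R (xs k) * (if k = i then f (xs k) else if k = j then g (xs k) else 1)) := by
    intro xs
    rw [Finset.prod_mul_distrib, prod_two_ite hij (fun k => f (xs k)) (fun k => g (xs k))]
  simp_rw [key]
  rw [sum_prod_fn (fun k y => R y * (if k = i then f y else if k = j then g y else 1))]
  have : ∀ k : Fin n, (∑ y, R y * (if k = i then f y else if k = j then g y else 1))
      = if k = i then ∑ y, R y * f y else if k = j then ∑ y, R y * g y else 1 := by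
    intro k
    by_cases h : k = i
    · simp [h]
    · by_cases h' : k = j <;> simp [h, h', hsum]
  simp_rw [this]
  exact prod_two_ite hij _ _

lemma variance_count (hsum : ∑ y, R y = 1) (x : Fin d) :
    ∑ xs : Fin n → Fin d, (∏ k, R (xs k)) * ((countIn x xs : ℝ) - n * R x) ^ 2
      = n * (R x * (1 - R x)) := by
  set χ : Fin d → ℝ := fun y => if y = x then 1 else 0 with hχ
  have hcount : ∀ xs : Fin n → Fin d, (countIn x xs : ℝ) = ∑ i, χ (xs i) := by
    intro xs
    rw [countIn, Finset.card_filter]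
    push_cast
    rfl
  have hmean : ∑ y, R y * (χ y - R x) = 0 := by
    simp only [mul_sub]
    rw [Finset.sum_sub_distrib]
    have h1 : ∑ y, R y * χ y = R x := by
      simp only [hχ, mul_ite, mul_one, mul_zero]
      simp
    have h2 : ∑ y, R y * R x = R x := by rw [← Finset.sum_mul, hsum, one_mul]
    rw [h1, h2, sub_self]
  have hvar : ∑ y, R y * (χ y - R x) ^ 2 = R x * (1 - R x) := by
    have : ∀ y, R y * (χ y - R x) ^ 2
        = R y * R x ^ 2 + (if y = x then R y * (1 - 2 * R x) else 0) := by
      intro y; by_cases h : y = x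
      · simp only [hχ, h, if_pos rfl, if_true]; ring
      · simp only [hχ, if_neg h]; ring
    simp_rw [this]
    rw [Finset.sum_add_distrib, ← Finset.sum_mul, hsum, Finset.sum_ite_eq' univ x
      (fun y => R y * (1 - 2 * R x))]
    simp; ring
  have expand : ∀ xs : Fin n → Fin d, ((countIn x xs : ℝ) - n * R x) ^ 2
      = ∑ i, ∑ j, (χ (xs i) - R x) * (χ (xs j) - R x) := by
    intro xs
    rw [hcount]
    have : (∑ i, χ (xs i)) - (n : ℝ) * R x = ∑ i, (χ (xs i) - R x) := by
      rw [Finset.sum_sub_distrib]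
      simp [Finset.sum_const, mul_comm]
    rw [this, sq, Finset.sum_mul_sum]
  simp_rw [expand, Finset.mul_sum]
  rw [Finset.sum_comm]
  have hij : ∀ i j : Fin n, (∑ xs : Fin n → Fin d,
      (∏ k, R (xs k)) * ((χ (xs i) - R x) * (χ (xs j) - R x)))
      = if i = j then R x * (1 - R x) else 0 := by
    intro i j
    by_cases h : i = j
    · subst h
      simp only [if_pos rfl]
      have : ∀ xs : Fin n → Fin d, (∏ k, R (xs k)) * ((χ (xs i) - R x) * (χ (xs i) - R x))
          = (∏ k, R (xs k)) * ((fun y => (χ y - R x) ^ 2) (xs i)) := by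
        intro xs; simp [sq]
      simp_rw [this]
      rw [marg_one hsum i (fun y => (χ y - R x) ^ 2), hvar]
      simp
    · rw [if_neg h, marg_two hsum h (fun y => χ y - R x) (fun y => χ y - R x), hmean,
        mul_zero]
  have : ∀ i : Fin n, (∑ xs : Fin n → Fin d, ∑ j : Fin n,
      (∏ k, R (xs k)) * ((χ (xs i) - R x) * (χ (xs j) - R x))) = R x * (1 - R x) := by
    intro i
    rw [Finset.sum_comm]
    simp_rw [hij]
    rw [Finset.sum_ite_eq univ i (fun _ => R x * (1 - R x)), if_pos (mem_univ i)]
  simp_rw [this]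
  rw [Finset.sum_const]
  simp [nsmul_eq_mul]

lemma w_nonneg (hR0 : ∀ y, 0 ≤ R y) (xs : Fin n → Fin d) : 0 ≤ ∏ k, R (xs k) :=
  Finset.prod_nonneg fun _ _ => hR0 _

lemma total_w (hsum : ∑ y, R y = 1) :
    ∑ xs : Fin n → Fin d, ∏ k, R (xs k) = 1 := by
  rw [sum_prod_fn (fun _ y => R y)]
  simp [hsum]

lemma cheb_letter (hR0 : ∀ y, 0 ≤ R y) (hsum : ∑ y, R y = 1) {δ : ℝ} (hδ : 0 < δ) (x : Fin d) :
    ∑ xs : Fin n → Fin d,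
      (if ¬ (|(countIn x xs : ℝ) - n * R x| ≤ δ * Real.sqrt n * Real.sqrt (R x * (1 - R x)))
        then ∏ k, R (xs k) else 0) ≤ 1 / δ ^ 2 := by
  have hR1 : R x ≤ 1 := by
    rw [← hsum]
    exact Finset.single_le_sum (fun y _ => hR0 y) (mem_univ x)
  by_cases hσ : R x * (1 - R x) = 0
  · have hzero : ∀ xs : Fin n → Fin d,
        (if ¬ (|(countIn x xs : ℝ) - n * R x| ≤ δ * Real.sqrt n * Real.sqrt (R x * (1 - R x)))
          then ∏ k, R (xs k) else 0) = 0 := by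
      intro xs
      by_cases hbad : |(countIn x xs : ℝ) - n * R x|
          ≤ δ * Real.sqrt n * Real.sqrt (R x * (1 - R x))
      · simp [hbad]
      · rw [if_pos hbad]
        rcases mul_eq_zero.mp hσ with h0 | h1
        · have hNpos : countIn x xs ≠ 0 := by
            intro hN
            apply hbad
            simp [hN, h0, hσ]
          obtain ⟨i, hi⟩ : ∃ i, xs i = x := by
            by_contra hno
            push_neg at hno
            apply hNpos
            rw [countIn, Finset.card_eq_zero, Finset.eq_empty_iff_forall_notMem]
            intro i hi
            exact hno i (by simpa using hi)
          exact Finset.prod_eq_zero (mem_univ i) (by rw [hi, h0])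
        · have hRx : R x = 1 := by linarith [sub_eq_zero.mp h1]
          have hother : ∀ y, y ≠ x → R y = 0 := by
            intro y hy
            have h2 : ∑ z ∈ univ.erase x, R z = 0 := by
              have h3 := Finset.add_sum_erase univ R (mem_univ x)
              rw [hsum] at h3
              linarith
            have := (Finset.sum_eq_zero_iff_of_nonneg fun z _ => hR0 z).mp h2 y
              (Finset.mem_erase.mpr ⟨hy, mem_univ y⟩)
            exact this
          by_cases hconst : ∀ i, xs i = x
          · exfalso
            apply hbad
            have : countIn x xs = n := by
              rw [countIn, Finset.card_filter]
              simp [hconst]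
            simp [this, hRx, hσ]
          · push_neg at hconst
            obtain ⟨i, hi⟩ := hconst
            exact Finset.prod_eq_zero (mem_univ i) (hother _ hi)
    rw [Finset.sum_congr rfl fun xs _ => hzero xs]
    simp
    positivity
  · have hσpos : 0 < R x * (1 - R x) :=
      lt_of_le_of_ne (mul_nonneg (hR0 x) (by linarith)) (Ne.symm hσ)
    by_cases hn : n = 0
    · subst hn
      have hzero : ∀ xs : Fin 0 → Fin d,
          (if ¬ (|(countIn x xs : ℝ) - (0 : ℕ) * R x|
              ≤ δ * Real.sqrt (0:ℕ) * Real.sqrt (R x * (1 - R x)))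
            then ∏ k, R (xs k) else 0) = 0 := by
        intro xs
        have hP : |(countIn x xs : ℝ) - (0:ℕ) * R x|
            ≤ δ * Real.sqrt (0:ℕ) * Real.sqrt (R x * (1 - R x)) := by
          have : countIn x xs = 0 := by
            rw [countIn, Finset.card_eq_zero, Finset.eq_empty_iff_forall_notMem]
            intro i _
            exact absurd i.2 (by omega)
          simp [this]
        rw [if_neg (not_not_intro hP)]
      rw [Finset.sum_congr rfl fun xs _ => hzero xs]
      simp
      positivity
    · have hnpos : (0 : ℝ) < n := Nat.cast_pos.mpr (Nat.pos_of_ne_zero hn)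
      set c := δ * Real.sqrt n * Real.sqrt (R x * (1 - R x)) with hc
      have hcpos : 0 < c := by
        apply mul_pos (mul_pos hδ _) _
        · exact Real.sqrt_pos.mpr hnpos
        · exact Real.sqrt_pos.mpr hσpos
      have hc2 : c ^ 2 = δ ^ 2 * ((n : ℝ) * (R x * (1 - R x))) := by
        rw [hc, mul_pow, mul_pow, Real.sq_sqrt hnpos.le, Real.sq_sqrt hσpos.le]
        ring
      have key : ∀ xs : Fin n → Fin d,
          (if ¬(|(countIn x xs : ℝ) - n * R x| ≤ c) then ∏ k, R (xs k) else 0)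
            ≤ (∏ k, R (xs k)) * ((countIn x xs : ℝ) - n * R x) ^ 2 / c ^ 2 := by
        intro xs
        have hw : 0 ≤ ∏ k, R (xs k) := Finset.prod_nonneg fun _ _ => hR0 _
        by_cases hbad : |(countIn x xs : ℝ) - n * R x| ≤ c
        · rw [if_neg (not_not_intro hbad)]
          positivity
        · rw [if_pos hbad]
          push_neg at hbad
          have h2 : c ^ 2 < ((countIn x xs : ℝ) - n * R x) ^ 2 := by
            have h3 := pow_lt_pow_left₀ hbad hcpos.le (two_ne_zero)
            rwa [sq_abs] at h3
          have h4 : 1 ≤ ((countIn x xs : ℝ) - n * R x) ^ 2 / c ^ 2 :=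
            (one_le_div (by positivity)).mpr h2.le
          calc ∏ k, R (xs k) = (∏ k, R (xs k)) * 1 := by ring
            _ ≤ (∏ k, R (xs k)) * (((countIn x xs : ℝ) - n * R x) ^ 2 / c ^ 2) :=
                mul_le_mul_of_nonneg_left h4 hw
            _ = (∏ k, R (xs k)) * ((countIn x xs : ℝ) - n * R x) ^ 2 / c ^ 2 := by ring
      have hsum2 : ∑ xs : Fin n → Fin d,
          (∏ k, R (xs k)) * ((countIn x xs : ℝ) - n * R x) ^ 2 / c ^ 2 = 1 / δ ^ 2 := by
        rw [← Finset.sum_div, variance_count hsum x, hc2]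
        rw [div_eq_div_iff (by positivity) (by positivity)]
        ring
      exact le_trans (Finset.sum_le_sum fun xs _ => key xs) (le_of_eq hsum2)

lemma prodProb_typical {δ : ℝ} (hR0 : ∀ y, 0 ≤ R y) (hsum : ∑ y, R y = 1) (hδ : 0 < δ) :
    1 - (d : ℝ) / δ ^ 2 ≤ prodProb R (typicalSet n R δ) := by
  have htyp : prodProb R (typicalSet n R δ) = ∑ xs ∈ univ.filter (fun xs : Fin n → Fin d =>
      ∀ x : Fin d, |(countIn x xs : ℝ) - n * R x|
        ≤ δ * Real.sqrt n * Real.sqrt (R x * (1 - R x))), ∏ k, R (xs k) := by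
    simp only [prodProb, typicalSet, Finset.filter_congr_decidable]
    congr
  have hbound : ∑ xs ∈ univ.filter (fun xs : Fin n → Fin d => ¬ ∀ x : Fin d,
      |(countIn x xs : ℝ) - n * R x| ≤ δ * Real.sqrt n * Real.sqrt (R x * (1 - R x))),
      (∏ k, R (xs k)) ≤ (d : ℝ) / δ ^ 2 := by
    have step1 : ∀ xs ∈ univ.filter (fun xs : Fin n → Fin d => ¬ ∀ x : Fin d,
        |(countIn x xs : ℝ) - n * R x| ≤ δ * Real.sqrt n * Real.sqrt (R x * (1 - R x))),
        (∏ k, R (xs k)) ≤ ∑ x : Fin d,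
          (if ¬ (|(countIn x xs : ℝ) - n * R x|
              ≤ δ * Real.sqrt n * Real.sqrt (R x * (1 - R x)))
            then ∏ k, R (xs k) else 0) := by
      intro xs hxs
      have hxs2 := (Finset.mem_filter.mp hxs).2
      push_neg at hxs2
      obtain ⟨x₀, hx₀⟩ := hxs2
      have hnn : ∀ x : Fin d, 0 ≤ (if ¬ (|(countIn x xs : ℝ) - n * R x|
          ≤ δ * Real.sqrt n * Real.sqrt (R x * (1 - R x)))
          then ∏ k, R (xs k) else 0) := by
        intro x
        by_cases h : |(countIn x xs : ℝ) - n * R x|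
            ≤ δ * Real.sqrt n * Real.sqrt (R x * (1 - R x))
        · simp [h]
        · rw [if_pos h]
          exact w_nonneg hR0 xs
      have hkey := Finset.single_le_sum (f := fun x : Fin d =>
          if ¬ (|(countIn x xs : ℝ) - n * R x|
              ≤ δ * Real.sqrt n * Real.sqrt (R x * (1 - R x)))
            then ∏ k, R (xs k) else 0) (fun x _ => hnn x) (mem_univ x₀)
      beta_reduce at hkey
      rw [if_pos (not_le.mpr hx₀)] at hkey
      exact hkey
    calc ∑ xs ∈ univ.filter (fun xs : Fin n → Fin d => ¬ ∀ x : Fin d,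
          |(countIn x xs : ℝ) - n * R x| ≤ δ * Real.sqrt n * Real.sqrt (R x * (1 - R x))),
          (∏ k, R (xs k))
        ≤ ∑ xs ∈ univ.filter (fun xs : Fin n → Fin d => ¬ ∀ x : Fin d,
          |(countIn x xs : ℝ) - n * R x| ≤ δ * Real.sqrt n * Real.sqrt (R x * (1 - R x))),
          ∑ x : Fin d,
          (if ¬ (|(countIn x xs : ℝ) - n * R x|
              ≤ δ * Real.sqrt n * Real.sqrt (R x * (1 - R x)))
            then ∏ k, R (xs k) else 0) := Finset.sum_le_sum step1
      _ ≤ ∑ xs : Fin n → Fin d, ∑ x : Fin d,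
          (if ¬ (|(countIn x xs : ℝ) - n * R x|
              ≤ δ * Real.sqrt n * Real.sqrt (R x * (1 - R x)))
            then ∏ k, R (xs k) else 0) := by
          apply Finset.sum_le_sum_of_subset_of_nonneg (Finset.filter_subset _ _)
          intro xs _ _
          apply Finset.sum_nonneg
          intro x _
          by_cases h : |(countIn x xs : ℝ) - n * R x|
              ≤ δ * Real.sqrt n * Real.sqrt (R x * (1 - R x))
          · simp [h]
          · rw [if_pos h]; exact w_nonneg hR0 xs
      _ = ∑ x : Fin d, ∑ xs : Fin n → Fin d,
          (if ¬ (|(countIn x xs : ℝ) - n * R x|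
              ≤ δ * Real.sqrt n * Real.sqrt (R x * (1 - R x)))
            then ∏ k, R (xs k) else 0) := Finset.sum_comm
      _ ≤ ∑ _x : Fin d, 1 / δ ^ 2 := Finset.sum_le_sum fun x _ => cheb_letter hR0 hsum hδ x
      _ = (d : ℝ) / δ ^ 2 := by
          rw [Finset.sum_const, Finset.card_univ, Fintype.card_fin, nsmul_eq_mul]
          ring
  have hsplit := Finset.sum_filter_add_sum_filter_not univ (fun xs : Fin n → Fin d =>
      ∀ x : Fin d, |(countIn x xs : ℝ) - n * R x|
        ≤ δ * Real.sqrt n * Real.sqrt (R x * (1 - R x)))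
      (fun xs : Fin n → Fin d => ∏ k, R (xs k))
  rw [total_w hsum] at hsplit
  rw [htyp]
  linarith

end Aux

section Exp2

lemma exp2_pos (t : ℝ) : 0 < exp2 t := Real.rpow_pos_of_pos two_pos t

lemma exp2_add (s t : ℝ) : exp2 (s + t) = exp2 s * exp2 t := Real.rpow_add two_pos s t

lemma exp2_mono {s t : ℝ} (h : s ≤ t) : exp2 s ≤ exp2 t :=
  Real.rpow_le_rpow_left_iff (x := 2) (by norm_num) |>.mpr h

lemma exp2_sum {ι : Type*} (s : Finset ι) (f : ι → ℝ) :
    exp2 (∑ i ∈ s, f i) = ∏ i ∈ s, exp2 (f i) := by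
  classical
  induction s using Finset.induction_on with
  | empty => simp [exp2]
  | insert _ _ h ih =>
    rw [Finset.sum_insert h, Finset.prod_insert h, exp2_add, ih]

lemma Kconst_eq : Kconst = 2 / (Real.exp 1 * Real.log 2) := by
  rw [Kconst, Real.logb, Real.log_exp]
  field_simp

lemma Kconst_nonneg : 0 ≤ Kconst := by
  rw [Kconst_eq]
  positivity

lemma sqrt_neg_logb_le {p : ℝ} (h0 : 0 ≤ p) (h1 : p ≤ 1) :
    Real.sqrt (p * (1 - p)) * (-Real.logb 2 p) ≤ Kconst := by
  rcases eq_or_lt_of_le h0 with h | hpos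
  · rw [← h]
    simp [Kconst_nonneg]
  · have hlog2 : 0 < Real.log 2 := Real.log_pos (by norm_num)
    have hsp : 0 < Real.sqrt p := Real.sqrt_pos.mpr hpos
    have step1 : Real.sqrt (p * (1 - p)) ≤ Real.sqrt p := by
      apply Real.sqrt_le_sqrt
      nlinarith
    have hnlog : 0 ≤ -Real.logb 2 p := by
      rw [neg_nonneg]
      exact Real.logb_nonpos (by norm_num) h0 h1
    have step2 : Real.sqrt p * (-Real.log p) ≤ 2 / Real.exp 1 := by
      have hlogsqrt : Real.log (Real.sqrt p) = (1 / 2) * Real.log p := by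
        rw [Real.log_sqrt h0]; ring
      have hlb : Real.log ((Real.sqrt p)⁻¹) ≤ (Real.sqrt p)⁻¹ / Real.exp 1 := by
        have hx : 0 < (Real.sqrt p)⁻¹ / Real.exp 1 := by positivity
        have := Real.log_le_sub_one_of_pos hx
        rw [Real.log_div (by positivity) (Real.exp_ne_zero 1), Real.log_exp] at this
        linarith
      rw [Real.log_inv, hlogsqrt] at hlb
      have := mul_le_mul_of_nonneg_left hlb hsp.le
      rw [mul_comm (Real.sqrt p) _] at this
      calc Real.sqrt p * (-Real.log p) = 2 * (-(1/2 * Real.log p) * Real.sqrt p) := by ring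
        _ ≤ 2 * ((Real.sqrt p)⁻¹ / Real.exp 1 * Real.sqrt p) := by linarith
        _ = 2 / Real.exp 1 := by
            field_simp
    calc Real.sqrt (p * (1 - p)) * (-Real.logb 2 p)
        ≤ Real.sqrt p * (-Real.logb 2 p) := mul_le_mul_of_nonneg_right step1 hnlog
      _ = (Real.sqrt p * (-Real.log p)) / Real.log 2 := by
          rw [Real.logb]; ring
      _ ≤ (2 / Real.exp 1) / Real.log 2 := by gcongr
      _ = Kconst := by
          rw [Kconst_eq]
          field_simp

lemma typical_prod_le {n d : ℕ} {R : Fin d → ℝ} (hR0 : ∀ y, 0 ≤ R y) (hsum : ∑ y, R y = 1)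
    {δ : ℝ} (hδ : 0 ≤ δ) {js : Fin n → Fin d} (hjs : js ∈ typicalSet n R δ) :
    ∏ i, R (js i) ≤ exp2 ((n : ℝ) * (∑ j, R j * Real.logb 2 (R j))
      + Kconst * d * δ * Real.sqrt n) := by
  have hR1 : ∀ j, R j ≤ 1 := by
    intro j
    rw [← hsum]
    exact Finset.single_le_sum (fun y _ => hR0 y) (mem_univ j)
  simp only [typicalSet, Finset.mem_filter] at hjs
  have htyp := hjs.2
  have hregroup : ∏ i, R (js i) = ∏ j, R j ^ (countIn j js : ℕ) := by
    rw [← Finset.prod_fiberwise' univ js R]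
    apply Finset.prod_congr rfl
    intro j _
    rw [Finset.prod_const]
    congr 1
    rw [countIn, Finset.card_filter, Finset.card_filter]
    exact Finset.sum_congr rfl fun i _ => by congr
  have hperj : ∀ j : Fin d, R j ^ (countIn j js : ℕ)
      = exp2 ((countIn j js : ℝ) * Real.logb 2 (R j)) := by
    intro j
    rcases eq_or_lt_of_le (hR0 j) with h | hpos
    · have hN : countIn j js = 0 := by
        have h2 := htyp j
        rw [← h] at h2
        simp at h2
        exact_mod_cast h2
      rw [hN, ← h]
      simp [exp2]
    · rw [exp2, mul_comm, Real.rpow_mul (by norm_num : (0:ℝ) ≤ 2),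
        Real.rpow_logb two_pos (by norm_num) hpos, Real.rpow_natCast]
  have hexp : ∑ j, (countIn j js : ℝ) * Real.logb 2 (R j)
      ≤ (n : ℝ) * (∑ j, R j * Real.logb 2 (R j)) + Kconst * d * δ * Real.sqrt n := by
    have perj : ∀ j : Fin d, (countIn j js : ℝ) * Real.logb 2 (R j)
        ≤ (n : ℝ) * (R j * Real.logb 2 (R j)) + Kconst * (δ * Real.sqrt n) := by
      intro j
      have hL : Real.logb 2 (R j) ≤ 0 := Real.logb_nonpos (by norm_num) (hR0 j) (hR1 j)
      have hN : (n : ℝ) * R j - δ * Real.sqrt n * Real.sqrt (R j * (1 - R j))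
          ≤ (countIn j js : ℝ) := by
        have := abs_le.mp (htyp j)
        linarith [this.1]
      have h1 : (countIn j js : ℝ) * Real.logb 2 (R j)
          ≤ ((n : ℝ) * R j - δ * Real.sqrt n * Real.sqrt (R j * (1 - R j)))
            * Real.logb 2 (R j) := mul_le_mul_of_nonpos_right hN hL
      have hkey := sqrt_neg_logb_le (hR0 j) (hR1 j)
      have h2 : 0 ≤ δ * Real.sqrt n := by positivity
      have h3 : (δ * Real.sqrt n) * (Real.sqrt (R j * (1 - R j)) * (-Real.logb 2 (R j)))
          ≤ (δ * Real.sqrt n) * Kconst := mul_le_mul_of_nonneg_left hkey h2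
      nlinarith [h1, h3]
    calc ∑ j, (countIn j js : ℝ) * Real.logb 2 (R j)
        ≤ ∑ j : Fin d, ((n : ℝ) * (R j * Real.logb 2 (R j)) + Kconst * (δ * Real.sqrt n)) :=
          Finset.sum_le_sum fun j _ => perj j
      _ = (n : ℝ) * (∑ j, R j * Real.logb 2 (R j)) + Kconst * d * δ * Real.sqrt n := by
          rw [Finset.sum_add_distrib, ← Finset.mul_sum, Finset.sum_const, Finset.card_univ,
            Fintype.card_fin, nsmul_eq_mul]
          ring
  calc ∏ i, R (js i) = ∏ j, R j ^ (countIn j js : ℕ) := hregroup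
    _ = exp2 (∑ j, (countIn j js : ℝ) * Real.logb 2 (R j)) := by
        rw [exp2_sum]
        exact Finset.prod_congr rfl fun j _ => hperj j
    _ ≤ _ := exp2_mono hexp

end Exp2

section MatrixAux

lemma trace_vecMulVec_mul {ι : Type*} [Fintype ι] (v : ι → ℂ) (M : Matrix ι ι ℂ) :
    Matrix.trace (Matrix.vecMulVec v (star v) * M) = dotProduct (star v) (M *ᵥ v) := by
  simp only [Matrix.trace, Matrix.diag_apply, Matrix.mul_apply, Matrix.vecMulVec_apply,
    dotProduct, Matrix.mulVec, Pi.star_apply]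
  rw [Finset.sum_comm]
  apply Finset.sum_congr rfl
  intro b _
  rw [Finset.mul_sum]
  apply Finset.sum_congr rfl
  intro a _
  ring

lemma tensorPow_decomp {d n : ℕ} (ρ : Mat d) (R : Fin d → ℝ) (u : Fin d → Fin d → ℂ)
    (hρ : ∀ a b, ρ a b = ∑ j, (R j : ℂ) * (u j a * star (u j b))) :
    tensorPow (fun _ : Fin n => ρ)
      = ∑ js : Fin n → Fin d, ((∏ i, R (js i) : ℝ) : ℂ) •
          Matrix.vecMulVec (fun a => ∏ i, u (js i) (a i))
            (star fun a : Fin n → Fin d => ∏ i, u (js i) (a i)) := by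
  ext a b
  simp only [tensorPow, Matrix.of_apply, Matrix.sum_apply, Matrix.smul_apply,
    Matrix.vecMulVec_apply, Pi.star_apply, smul_eq_mul]
  rw [Finset.prod_congr rfl fun i (_ : i ∈ univ) => hρ (a i) (b i)]
  rw [Fintype.prod_sum (f := fun i j => (R j : ℂ) * (u j (a i) * star (u j (b i))))]
  apply Finset.sum_congr rfl
  intro js _
  simp only [Finset.prod_mul_distrib, Complex.ofReal_prod, star_prod]

lemma one_decomp {d n : ℕ} (u : Fin d → Fin d → ℂ)
    (hc : ∀ a b : Fin d, ∑ j, u j a * star (u j b) = if a = b then 1 else 0) :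
    (1 : MatPow d n)
      = ∑ js : Fin n → Fin d,
          Matrix.vecMulVec (fun a => ∏ i, u (js i) (a i))
            (star fun a : Fin n → Fin d => ∏ i, u (js i) (a i)) := by
  ext a b
  simp only [Matrix.sum_apply, Matrix.vecMulVec_apply, Pi.star_apply, Matrix.one_apply]
  have key : ∀ js : Fin n → Fin d, (∏ i, u (js i) (a i)) * star (∏ i, u (js i) (b i))
      = ∏ i, (u (js i) (a i) * star (u (js i) (b i))) := by
    intro js
    rw [star_prod, ← Finset.prod_mul_distrib]
  rw [Finset.sum_congr rfl fun js _ => key js]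
  rw [← Fintype.prod_sum (f := fun i j => u j (a i) * star (u j (b i)))]
  rw [Finset.prod_congr rfl fun i (_ : i ∈ univ) => hc (a i) (b i)]
  rw [Finset.prod_boole]
  simp [funext_iff]

lemma psi_norm {d n : ℕ} (u : Fin d → Fin d → ℂ)
    (hortho : ∀ j, ∑ x, star (u j x) * u j x = 1) (js : Fin n → Fin d) :
    dotProduct (star fun a : Fin n → Fin d => ∏ i, u (js i) (a i))
      (fun a : Fin n → Fin d => ∏ i, u (js i) (a i)) = 1 := by
  simp only [dotProduct, Pi.star_apply]
  have key : ∀ a : Fin n → Fin d, star (∏ i, u (js i) (a i)) * ∏ i, u (js i) (a i)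
      = ∏ i, (star (u (js i) (a i)) * u (js i) (a i)) := by
    intro a
    rw [star_prod, ← Finset.prod_mul_distrib]
  rw [Finset.sum_congr rfl fun a _ => key a]
  rw [← Fintype.prod_sum (f := fun i x => star (u (js i) x) * u (js i) x)]
  rw [Finset.prod_congr rfl fun i (_ : i ∈ univ) => hortho (js i)]
  simp

lemma spectral_entry {d : ℕ} (ρ : Mat d) (h : ρ.IsHermitian) (a b : Fin d) :
    ρ a b = ∑ j, ((h.eigenvalues j : ℝ) : ℂ)
      * ((h.eigenvectorUnitary : Mat d) a j * star ((h.eigenvectorUnitary : Mat d) b j)) := by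
  conv_lhs => rw [h.spectral_theorem, Unitary.conjStarAlgAut_apply]
  rw [Matrix.mul_apply]
  apply Finset.sum_congr rfl
  intro j _
  rw [Matrix.mul_diagonal, Matrix.star_apply]
  simp only [Function.comp_apply, RCLike.ofReal_alg, Complex.real_smul, mul_one]
  ring

lemma unitary_complete {d : ℕ} (ρ : Mat d) (h : ρ.IsHermitian) (a b : Fin d) :
    ∑ j, (h.eigenvectorUnitary : Mat d) a j * star ((h.eigenvectorUnitary : Mat d) b j)
      = if a = b then 1 else 0 := by
  have hU : (h.eigenvectorUnitary : Mat d) * star (h.eigenvectorUnitary : Mat d) = 1 :=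
    Matrix.mem_unitaryGroup_iff.mp h.eigenvectorUnitary.2
  have h2 := Matrix.ext_iff.mpr hU a b
  rw [Matrix.mul_apply] at h2
  simp only [Matrix.star_apply, Matrix.one_apply] at h2
  exact h2

lemma unitary_norm {d : ℕ} (ρ : Mat d) (h : ρ.IsHermitian) (j : Fin d) :
    ∑ x, star ((h.eigenvectorUnitary : Mat d) x j) * (h.eigenvectorUnitary : Mat d) x j = 1 := by
  have hU : star (h.eigenvectorUnitary : Mat d) * (h.eigenvectorUnitary : Mat d) = 1 :=
    Matrix.mem_unitaryGroup_iff'.mp h.eigenvectorUnitary.2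
  have h2 := Matrix.ext_iff.mpr hU j j
  rw [Matrix.mul_apply] at h2
  simp only [Matrix.star_apply, Matrix.one_apply, if_pos rfl] at h2
  exact h2

lemma eigenvalues_sum_eq_one {d : ℕ} (ρ : Mat d) (h : ρ.IsHermitian) (htr : ρ.trace = 1) :
    ∑ j, h.eigenvalues j = 1 := by
  have hU : star (h.eigenvectorUnitary : Mat d) * (h.eigenvectorUnitary : Mat d) = 1 :=
    Matrix.mem_unitaryGroup_iff'.mp h.eigenvectorUnitary.2
  have key : ρ.trace = ∑ j, ((h.eigenvalues j : ℝ) : ℂ) := by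
    conv_lhs => rw [h.spectral_theorem, Unitary.conjStarAlgAut_apply]
    rw [Matrix.trace_mul_cycle, hU, one_mul, Matrix.trace_diagonal]
    simp [RCLike.ofReal_alg]
  rw [htr] at key
  exact_mod_cast key.symm

end MatrixAux

/-- **Lemma 2, part 4 (Shadow bound for `ρ^{⊗n}`).** Every `η`-shadow `B` of `ρ^{⊗n}`
satisfies `Tr B ≥ (η − d/δ²) exp₂(nH(ρ) − Kdδ√n)`, with `K = 2 log₂(e)/e`. -/
theorem shadow_bound_tensor_power {d : ℕ} (ρ : Mat d) (hρ : IsState ρ)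
    (n : ℕ) (hn : 0 < n) (δ η : ℝ) (hδ : 0 < δ) (hη : 0 < η)
    (B : MatPow d n) (hB : IsShadow (tensorPow fun _ : Fin n => ρ) B η) :
    (η - (d : ℝ) / δ ^ 2) * exp2 ((n : ℝ) * vnEntropy ρ - Kconst * d * δ * Real.sqrt n)
      ≤ (Matrix.trace B).re := by
  classical
  obtain ⟨hPSD, htrace⟩ := hρ
  have h : ρ.IsHermitian := hPSD.1
  set R : Fin d → ℝ := h.eigenvalues with hRdef
  set u : Fin d → Fin d → ℂ := fun j a => (h.eigenvectorUnitary : Mat d) a j with hudef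
  have hR0 : ∀ y, 0 ≤ R y := fun y => hPSD.eigenvalues_nonneg y
  have hsum : ∑ y, R y = 1 := eigenvalues_sum_eq_one ρ h htrace
  have hρab : ∀ a b, ρ a b = ∑ j, (R j : ℂ) * (u j a * star (u j b)) := spectral_entry ρ h
  have hcomp : ∀ a b : Fin d, ∑ j, u j a * star (u j b) = if a = b then 1 else 0 :=
    unitary_complete ρ h
  have hnorm : ∀ j, ∑ x, star (u j x) * u j x = 1 := unitary_norm ρ h
  set Ψ : (Fin n → Fin d) → (Fin n → Fin d) → ℂ :=
    fun js a => ∏ i, u (js i) (a i) with hΨdef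
  set w : (Fin n → Fin d) → ℝ := fun js => ∏ i, R (js i) with hwdef
  set p : (Fin n → Fin d) → ℂ :=
    fun js => dotProduct (star (Ψ js)) (B *ᵥ Ψ js) with hpdef
  have hw0 : ∀ js, 0 ≤ w js := fun js => Finset.prod_nonneg fun _ _ => hR0 _
  -- scalar positivity facts
  have hp0 : ∀ js, 0 ≤ (p js).re := by
    intro js
    have := hB.1.dotProduct_mulVec_nonneg (Ψ js)
    exact (Complex.le_def.mp this).1
  have hp1 : ∀ js, (p js).re ≤ 1 := by
    intro js
    have h2 := hB.2.1.dotProduct_mulVec_nonneg (Ψ js)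
    rw [Matrix.sub_mulVec, dotProduct_sub, Matrix.one_mulVec] at h2
    have h3 := (Complex.le_def.mp h2).1
    have h4 : dotProduct (star (Ψ js)) (Ψ js) = 1 := psi_norm u hnorm js
    rw [Complex.sub_re, h4] at h3
    simp only [Complex.zero_re, Complex.one_re] at h3
    linarith
  -- trace expansions
  have htr1 : ∀ M : MatPow d n,
      Matrix.trace ((∑ js : Fin n → Fin d, ((w js : ℝ) : ℂ) •
        Matrix.vecMulVec (Ψ js) (star (Ψ js))) * M)
      = ∑ js : Fin n → Fin d, ((w js : ℝ) : ℂ) * dotProduct (star (Ψ js)) (M *ᵥ Ψ js) := by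
    intro M
    rw [Matrix.sum_mul, Matrix.trace_sum]
    apply Finset.sum_congr rfl
    intro js _
    rw [Matrix.smul_mul, Matrix.trace_smul, trace_vecMulVec_mul, smul_eq_mul]
  have htr2 : ∀ M : MatPow d n,
      Matrix.trace ((∑ js : Fin n → Fin d,
        Matrix.vecMulVec (Ψ js) (star (Ψ js))) * M)
      = ∑ js : Fin n → Fin d, dotProduct (star (Ψ js)) (M *ᵥ Ψ js) := by
    intro M
    rw [Matrix.sum_mul, Matrix.trace_sum]
    apply Finset.sum_congr rfl
    intro js _
    rw [trace_vecMulVec_mul]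
  -- η ≤ ∑ w * p.re
  have hshadow : η ≤ ∑ js : Fin n → Fin d, w js * (p js).re := by
    have h3 := hB.2.2
    have hdec := tensorPow_decomp (n := n) ρ R u hρab
    rw [hdec, htr1 B, Complex.re_sum] at h3
    have : ∀ js : Fin n → Fin d, (((w js : ℝ) : ℂ) * p js).re = w js * (p js).re := by
      intro js
      simp [Complex.mul_re]
    rw [Finset.sum_congr rfl fun js _ => this js] at h3
    exact h3
  -- (trace B).re = ∑ p.re
  have hTrB : (Matrix.trace B).re = ∑ js : Fin n → Fin d, (p js).re := by
    have h1B : Matrix.trace B = Matrix.trace ((1 : MatPow d n) * B) := by rw [one_mul]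
    rw [h1B, one_decomp u hcomp, htr2 B, Complex.re_sum]
  -- Chebyshev and typical bound
  set T : Finset (Fin n → Fin d) := typicalSet n R δ with hTdef
  have hcheb : 1 - (d : ℝ) / δ ^ 2 ≤ ∑ js ∈ T, w js := prodProb_typical hR0 hsum hδ
  have htotal : ∑ js : Fin n → Fin d, w js = 1 := total_w hsum
  have hsdiff : ∑ js ∈ univ \ T, w js + ∑ js ∈ T, w js = ∑ js : Fin n → Fin d, w js :=
    Finset.sum_sdiff (Finset.subset_univ T)
  have hcompl : ∑ js ∈ univ \ T, w js ≤ (d : ℝ) / δ ^ 2 := by linarith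
  have hsdiff2 : ∑ js ∈ univ \ T, w js * (p js).re + ∑ js ∈ T, w js * (p js).re
      = ∑ js : Fin n → Fin d, w js * (p js).re :=
    Finset.sum_sdiff (Finset.subset_univ T)
  have hbound1 : ∑ js ∈ univ \ T, w js * (p js).re ≤ (d : ℝ) / δ ^ 2 := by
    have : ∑ js ∈ univ \ T, w js * (p js).re ≤ ∑ js ∈ univ \ T, w js := by
      apply Finset.sum_le_sum
      intro js _
      calc w js * (p js).re ≤ w js * 1 := mul_le_mul_of_nonneg_left (hp1 js) (hw0 js)
        _ = w js := mul_one _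
    linarith
  set lam : ℝ := exp2 ((n : ℝ) * (∑ j, R j * Real.logb 2 (R j))
    + Kconst * d * δ * Real.sqrt n) with hlamdef
  have hbound2 : ∑ js ∈ T, w js * (p js).re ≤ lam * (Matrix.trace B).re := by
    calc ∑ js ∈ T, w js * (p js).re
        ≤ ∑ js ∈ T, lam * (p js).re := by
          apply Finset.sum_le_sum
          intro js hjs
          exact mul_le_mul_of_nonneg_right (typical_prod_le hR0 hsum hδ.le hjs) (hp0 js)
      _ = lam * ∑ js ∈ T, (p js).re := by rw [Finset.mul_sum]
      _ ≤ lam * ∑ js : Fin n → Fin d, (p js).re := by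
          apply mul_le_mul_of_nonneg_left _ (exp2_pos _).le
          exact Finset.sum_le_sum_of_subset_of_nonneg (Finset.subset_univ T)
            fun js _ _ => hp0 js
      _ = lam * (Matrix.trace B).re := by rw [hTrB]
  have hmain : η - (d : ℝ) / δ ^ 2 ≤ lam * (Matrix.trace B).re := by linarith
  -- entropy identification
  have hH : vnEntropy ρ = -∑ j, R j * Real.logb 2 (R j) := by
    rw [vnEntropy, dif_pos h]
  have hlamcancel : lam * exp2 ((n : ℝ) * vnEntropy ρ - Kconst * d * δ * Real.sqrt n) = 1 := by
    rw [hlamdef, ← exp2_add, hH]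
    have : (n : ℝ) * (∑ j, R j * Real.logb 2 (R j)) + Kconst * d * δ * Real.sqrt n
        + ((n : ℝ) * -(∑ j, R j * Real.logb 2 (R j)) - Kconst * d * δ * Real.sqrt n) = 0 := by
      ring
    rw [this]
    simp [exp2]
  have hfinal := mul_le_mul_of_nonneg_right hmain
    (exp2_pos ((n : ℝ) * vnEntropy ρ - Kconst * d * δ * Real.sqrt n)).le
  calc (η - (d : ℝ) / δ ^ 2) * exp2 ((n : ℝ) * vnEntropy ρ - Kconst * d * δ * Real.sqrt n)
      ≤ lam * (Matrix.trace B).re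
        * exp2 ((n : ℝ) * vnEntropy ρ - Kconst * d * δ * Real.sqrt n) := hfinal
    _ = (Matrix.trace B).re
        * (lam * exp2 ((n : ℝ) * vnEntropy ρ - Kconst * d * δ * Real.sqrt n)) := by ring
    _ = (Matrix.trace B).re := by rw [hlamcancel, mul_one]
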